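/- Let D be a finite acyclic digraph on a linearly ordered vertex set ρ and let x ∈ ρ satisfy δ_D^{-1}({x}) = {x}. Then the restriction of δ_D to ρ \ {x} equals δ_{D'}, where D' is the induced subdigraph of D on ρ \ {x}. -/

import Mathlib

/-- `delta ρ D i` is the minimum vertex of `ρ` reachable from `i` by a
directed path in `D` (where `i` is reachable from itself). -/
noncomputable def delta {S : Type*} [LinearOrder S]
    (ρ : Finset S) (D : S → S → Prop) (i : S) : S := by
  classical
  exact if h : (ρ.filter fun j => Relation.ReflTransGen D i j).Nonempty
    then (ρ.filter fun j => Relation.ReflTransGen D i j).min' h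
    else i

private lemma reach_avoid {S : Type*} (D : S → S → Prop) (x : S) :
    ∀ {i m : S}, Relation.ReflTransGen D i m → i ≠ x → m ≠ x →
      Relation.ReflTransGen (fun a b => D a b ∧ a ≠ x ∧ b ≠ x) i m ∨
      (Relation.ReflTransGen D i x ∧ Relation.ReflTransGen D x m) := by
  intro i m h
  induction h using Relation.ReflTransGen.head_induction_on with
  | refl => intro _ _; exact Or.inl .refl
  | head hab hbm ih =>
    intro hix hmx
    rename_i a b
    by_cases hbx : b = x
    · subst hbx; exact Or.inr ⟨Relation.ReflTransGen.single hab, hbm⟩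
    · rcases ih hbx hmx with h' | ⟨h1, h2⟩
      · exact Or.inl (Relation.ReflTransGen.head ⟨hab, hix, hbx⟩ h')
      · exact Or.inr ⟨Relation.ReflTransGen.head hab h1, h2⟩

/-- If `δ_D^{-1}({x}) = {x}`, then `δ_D` restricted to `ρ \ {x}` coincides
with `δ_{D'}`, where `D'` is the induced subdigraph of `D` on `ρ \ {x}`. -/
theorem delta_erase {S : Type*} [LinearOrder S] [DecidableEq S]
    (ρ : Finset S) (D : S → S → Prop)
    (hsupp : ∀ a b, D a b → a ∈ ρ ∧ b ∈ ρ)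
    (hacyc : ∀ a, ¬ Relation.TransGen D a a)
    (x : S) (hx : x ∈ ρ)
    (hfiber : ∀ i ∈ ρ, delta ρ D i = x ↔ i = x) :
    ∀ i ∈ ρ.erase x,
      delta (ρ.erase x) (fun a b => D a b ∧ a ≠ x ∧ b ≠ x) i
        = delta ρ D i := by
  classical
  intro i hi
  have hiρ : i ∈ ρ := Finset.mem_of_mem_erase hi
  have hix : i ≠ x := Finset.ne_of_mem_erase hi
  have hne : (ρ.filter fun j => Relation.ReflTransGen D i j).Nonempty :=
    ⟨i, Finset.mem_filter.2 ⟨hiρ, .refl⟩⟩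
  have hne' : ((ρ.erase x).filter fun j =>
      Relation.ReflTransGen (fun a b => D a b ∧ a ≠ x ∧ b ≠ x) i j).Nonempty :=
    ⟨i, Finset.mem_filter.2 ⟨hi, .refl⟩⟩
  rw [delta, delta]
  rw [dif_pos hne, dif_pos hne']
  set m := (ρ.filter fun j => Relation.ReflTransGen D i j).min' hne with hmdef
  have hmeq : delta ρ D i = m := by rw [delta, dif_pos hne]
  have hm := Finset.min'_mem _ hne
  rw [Finset.mem_filter] at hm
  have hmx : m ≠ x := fun h => hix ((hfiber i hiρ).1 (hmeq.trans h))
  apply le_antisymm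
  · apply Finset.min'_le
    rcases reach_avoid D x hm.2 hix hmx with h' | ⟨h1, h2⟩
    · exact Finset.mem_filter.2 ⟨Finset.mem_erase.2 ⟨hmx, hm.1⟩, h'⟩
    · exfalso
      have hnex : (ρ.filter fun j => Relation.ReflTransGen D x j).Nonempty :=
        ⟨x, Finset.mem_filter.2 ⟨hx, .refl⟩⟩
      have hd : delta ρ D x = x := (hfiber x hx).2 rfl
      rw [delta, dif_pos hnex] at hd
      have hxm : x ≤ m := hd ▸ Finset.min'_le _ m (Finset.mem_filter.2 ⟨hm.1, h2⟩)
      have hmx' : m ≤ x := Finset.min'_le _ x (Finset.mem_filter.2 ⟨hx, h1⟩)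
      exact hmx (le_antisymm hmx' hxm)
  · apply Finset.min'_le
    have hm' := Finset.min'_mem _ hne'
    rw [Finset.mem_filter] at hm'
    exact Finset.mem_filter.2 ⟨Finset.mem_of_mem_erase hm'.1,
      Relation.ReflTransGen.mono (r := fun a b => D a b ∧ a ≠ x ∧ b ≠ x) (p := D)
        (fun a b hab => hab.1) _ _ hm'.2⟩
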